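/- arXiv:1907.12276 — 3 statements merged into one kernel-verified Lean document; each statement's English description precedes it below -/
import Mathlib

section
/- Let G be the simple graph on vertex set {v₀, v₁, v₂, v₃, v₄, v₅} with edge set {v₀v₁, v₀v₅, v₁v₂, v₁v₄, v₁v₅, v₂v₃, v₂v₄, v₃v₄, v₄v₅}. Then Bob has a winning strategy in the connected graph coloring game on G with 3 colors. -/
open scoped Classical

namespace ConnGame

variable {V : Type*}

/-- A move `(v, a)` is proper at the partial coloring `c`: `v` is uncolored and
no neighbor of `v` already has color `a`. -/
def ProperMove (G : SimpleGraph V) {k : ℕ} (c : V → Option (Fin k)) (v : V) (a : Fin k) : Prop :=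
  c v = none ∧ ∀ u, G.Adj v u → c u ≠ some a

/-- Connectivity condition on a move: either no vertex is colored yet (first move),
or the chosen vertex has at least one colored neighbor.  This guarantees that the set
of colored vertices induces a connected subgraph after each move. -/
def ConnMove (G : SimpleGraph V) {k : ℕ} (c : V → Option (Fin k)) (v : V) : Prop :=
  (∀ u, c u = none) ∨ ∃ u, G.Adj v u ∧ (c u).isSome

/-- A legal move in the coloring game (connected version when `conn = true`). -/
def LegalMove (conn : Bool) (G : SimpleGraph V) {k : ℕ}
    (c : V → Option (Fin k)) (v : V) (a : Fin k) : Prop :=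
  ProperMove G c v a ∧ (conn = true → ConnMove G c v)

/-- The position obtained by coloring vertex `v` with color `a`. -/
def play [DecidableEq V] {k : ℕ} (c : V → Option (Fin k)) (v : V) (a : Fin k) :
    V → Option (Fin k) :=
  Function.update c v (some a)

/-- Alice has a winning strategy in the (connected, if `conn`) coloring game with `k`
colors, starting from position `c`, with `n` moves remaining, where `aliceTurn` records
whose turn it is.  Alice wins exactly if all vertices eventually get colored. -/
def AliceWinsFrom [DecidableEq V] (conn : Bool) (G : SimpleGraph V) (k : ℕ) :
    ℕ → Bool → (V → Option (Fin k)) → Prop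
  | 0, _, c => ∀ v, (c v).isSome
  | n + 1, aliceTurn, c =>
    (∀ v, (c v).isSome) ∨
      (if aliceTurn then
        ∃ v a, LegalMove conn G c v a ∧ AliceWinsFrom conn G k n false (play c v a)
      else
        (∃ v a, LegalMove conn G c v a) ∧
          ∀ v a, LegalMove conn G c v a → AliceWinsFrom conn G k n true (play c v a))

/-- Bob has a winning strategy in the (connected, if `conn`) coloring game with `k`
colors, from position `c` with `n` moves remaining.  Bob wins exactly if the game ends
(no legal move is available) while some vertex is still uncolored. -/
def BobWinsFrom [DecidableEq V] (conn : Bool) (G : SimpleGraph V) (k : ℕ) :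
    ℕ → Bool → (V → Option (Fin k)) → Prop
  | 0, _, c => ∃ v, c v = none
  | n + 1, aliceTurn, c =>
    (∃ v, c v = none) ∧
      (if aliceTurn then
        ∀ v a, LegalMove conn G c v a → BobWinsFrom conn G k n false (play c v a)
      else
        (¬ ∃ v a, LegalMove conn G c v a) ∨
          ∃ v a, LegalMove conn G c v a ∧ BobWinsFrom conn G k n true (play c v a))

/-- Alice has a winning strategy in the (connected, if `conn`) coloring game on `G`
with `k` colors (Alice moves first, starting from the all-uncolored position). -/
def AliceWinsColoringGame [Fintype V] [DecidableEq V] (conn : Bool) (G : SimpleGraph V)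
    (k : ℕ) : Prop :=
  AliceWinsFrom conn G k (Fintype.card V) true fun _ => none

/-- Bob has a winning strategy in the (connected, if `conn`) coloring game on `G`
with `k` colors. -/
def BobWinsColoringGame [Fintype V] [DecidableEq V] (conn : Bool) (G : SimpleGraph V)
    (k : ℕ) : Prop :=
  BobWinsFrom conn G k (Fintype.card V) true fun _ => none

/-- The game chromatic number: the least `k` such that Alice wins the coloring game
on `G` with `k` colors. -/
noncomputable def gameChromaticNumber [Fintype V] [DecidableEq V] (G : SimpleGraph V) : ℕ :=
  sInf {k | AliceWinsColoringGame false G k}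

/-- The connected game chromatic number: the least `k` such that Alice wins the
connected coloring game on `G` with `k` colors. -/
noncomputable def connGameChromaticNumber [Fintype V] [DecidableEq V] (G : SimpleGraph V) : ℕ :=
  sInf {k | AliceWinsColoringGame true G k}

/-- A legal move in the marking game (connected version when `conn = true`):
mark an unmarked vertex, which (in the connected game) must have a marked neighbor
unless no vertex is marked yet. -/
def MarkLegal (conn : Bool) (G : SimpleGraph V) (M : Finset V) (v : V) : Prop :=
  v ∉ M ∧ (conn = true → (M = ∅ ∨ ∃ u ∈ M, G.Adj u v))

/-- The marking-game objective for parameter `k`: every unmarked vertex has at most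
`k - 1` marked neighbors. -/
def MarkGood (G : SimpleGraph V) (k : ℕ) (M : Finset V) : Prop :=
  ∀ v ∉ M, (M.filter fun u => G.Adj u v).card < k

/-- Alice has a strategy in the (connected, if `conn`) marking game, from position `M`
with `n` moves remaining, guaranteeing that at every moment every unmarked vertex has
at most `k - 1` marked neighbors. -/
def AliceWinsMarkingFrom [DecidableEq V] (conn : Bool) (G : SimpleGraph V) (k : ℕ) :
    ℕ → Bool → Finset V → Prop
  | 0, _, M => MarkGood G k M
  | n + 1, aliceTurn, M =>
    MarkGood G k M ∧
      (if aliceTurn then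
        ∃ v, MarkLegal conn G M v ∧ AliceWinsMarkingFrom conn G k n false (insert v M)
      else
        ∀ v, MarkLegal conn G M v → AliceWinsMarkingFrom conn G k n true (insert v M))

/-- Alice achieves the marking-game bound `k` on `G` (connected version if `conn`). -/
def AliceWinsMarkingGame [Fintype V] [DecidableEq V] (conn : Bool) (G : SimpleGraph V)
    (k : ℕ) : Prop :=
  AliceWinsMarkingFrom conn G k (Fintype.card V) true ∅

/-- The game coloring number: the least `k` for which Alice has a strategy in the
marking game guaranteeing that every unmarked vertex always has at most `k - 1`
marked neighbors. -/
noncomputable def gameColoringNumber [Fintype V] [DecidableEq V] (G : SimpleGraph V) : ℕ :=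
  sInf {k | AliceWinsMarkingGame false G k}

/-- The connected game coloring number. -/
noncomputable def connGameColoringNumber [Fintype V] [DecidableEq V] (G : SimpleGraph V) : ℕ :=
  sInf {k | AliceWinsMarkingGame true G k}

/-- `H` is a minor of `G`: there is a family of nonempty, pairwise disjoint,
connected branch sets in `G` indexed by the vertices of `H`, with an edge of `G`
between the branch sets of any two adjacent vertices of `H`. -/
def IsMinorOf {W : Type*} (H : SimpleGraph W) (G : SimpleGraph V) : Prop :=
  ∃ f : W → Set V,
    (∀ w, (f w).Nonempty) ∧
    (∀ w, ((G.induce (f w)).Connected)) ∧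
    (∀ w w', w ≠ w' → Disjoint (f w) (f w')) ∧
    (∀ w w', H.Adj w w' → ∃ u ∈ f w, ∃ v ∈ f w', G.Adj u v)

/-- A graph is outerplanar iff it contains neither `K₄` nor `K_{2,3}` as a minor. -/
def Outerplanar (G : SimpleGraph V) : Prop :=
  ¬ IsMinorOf (SimpleGraph.completeGraph (Fin 4)) G ∧
  ¬ IsMinorOf (completeBipartiteGraph (Fin 2) (Fin 3)) G

end ConnGame

/-- The graph on vertices `v₀, …, v₅` with edge set
`{v₀v₁, v₀v₅, v₁v₂, v₁v₄, v₁v₅, v₂v₃, v₂v₄, v₃v₄, v₄v₅}`. -/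
def paperGraph : SimpleGraph (Fin 6) :=
  SimpleGraph.fromRel (fun i j =>
    (i, j) ∈ ([(0, 1), (0, 5), (1, 2), (1, 4), (1, 5), (2, 3), (2, 4), (3, 4), (4, 5)] :
      List (Fin 6 × Fin 6)))

namespace ConnGame
section Dec
variable {V : Type*} [Fintype V] [DecidableEq V] (G : SimpleGraph V) [DecidableRel G.Adj] {k : ℕ}

instance decProper (c : V → Option (Fin k)) (v : V) (a : Fin k) :
    Decidable (ProperMove G c v a) := inferInstanceAs (Decidable (_ ∧ _))
instance decConn (c : V → Option (Fin k)) (v : V) :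
    Decidable (ConnMove G c v) := inferInstanceAs (Decidable (_ ∨ _))
instance decLegal (conn : Bool) (c : V → Option (Fin k)) (v : V) (a : Fin k) :
    Decidable (LegalMove conn G c v a) := inferInstanceAs (Decidable (_ ∧ _))
instance decBob (conn : Bool) : ∀ (n : ℕ) (t : Bool) (c : V → Option (Fin k)),
    Decidable (BobWinsFrom conn G k n t c)
  | 0, _, _ => inferInstanceAs (Decidable (∃ _, _))
  | n + 1, _, _ =>
    have := decBob conn n
    inferInstanceAs (Decidable (_ ∧ _))
end Dec
end ConnGame

instance : DecidableRel paperGraph.Adj := fun a b =>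
  decidable_of_iff _ (SimpleGraph.fromRel_adj _ a b).symm

set_option maxHeartbeats 16000000 in
set_option maxRecDepth 100000 in
/-- Bob has a winning strategy in the connected coloring game on the
graph above with 3 colors. -/
theorem bobWins_paperGraph_three :
    ConnGame.BobWinsColoringGame true paperGraph 3 := by
  unfold ConnGame.BobWinsColoringGame
  decide
end

section
/- Let G be the simple graph on vertex set {v₀, v₁, v₂, v₃, v₄, v₅} with edge set {v₀v₁, v₀v₅, v₁v₂, v₁v₄, v₁v₅, v₂v₃, v₂v₄, v₃v₄, v₄v₅}. Then Alice has a winning strategy in the connected graph coloring game on G with 4 colors. -/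
open scoped Classical

instance inst_s15 : DecidableRel paperGraph.Adj := fun a b =>
  inferInstanceAs (Decidable (a ≠ b ∧ (_ ∨ _)))

instance {k} (c : Fin 6 → Option (Fin k)) (v : Fin 6) (a : Fin k) :
    Decidable (ConnGame.ProperMove paperGraph c v a) :=
  inferInstanceAs (Decidable (_ ∧ _))

instance {k} (c : Fin 6 → Option (Fin k)) (v : Fin 6) :
    Decidable (ConnGame.ConnMove paperGraph c v) :=
  inferInstanceAs (Decidable (_ ∨ _))

instance (conn : Bool) {k} (c : Fin 6 → Option (Fin k)) (v : Fin 6) (a : Fin k) :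
    Decidable (ConnGame.LegalMove conn paperGraph c v a) :=
  inferInstanceAs (Decidable (_ ∧ _))

instance decAliceWinsFrom (conn : Bool) (k : ℕ) :
    ∀ (n : ℕ) (b : Bool) (c : Fin 6 → Option (Fin k)),
      Decidable (ConnGame.AliceWinsFrom conn paperGraph k n b c)
  | 0, _, c => inferInstanceAs (Decidable (∀ v, (c v).isSome))
  | n + 1, b, c =>
    haveI : ∀ b' c', Decidable (ConnGame.AliceWinsFrom conn paperGraph k n b' c') :=
      decAliceWinsFrom conn k n
    inferInstanceAs (Decidable ((∀ v, (c v).isSome) ∨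
      (if b then
        ∃ v a, ConnGame.LegalMove conn paperGraph c v a ∧
          ConnGame.AliceWinsFrom conn paperGraph k n false (ConnGame.play c v a)
      else
        (∃ v a, ConnGame.LegalMove conn paperGraph c v a) ∧
          ∀ v a, ConnGame.LegalMove conn paperGraph c v a →
            ConnGame.AliceWinsFrom conn paperGraph k n true (ConnGame.play c v a))))

/-- Alice has a winning strategy in the connected coloring game on the
graph above with 4 colors. -/
theorem aliceWins_paperGraph_four :
    ConnGame.AliceWinsColoringGame true paperGraph 4 := by
  show ConnGame.AliceWinsFrom true paperGraph 4 (Fintype.card (Fin 6)) true fun _ => none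
  decide
end

section
/- For every integer n ≥ 1, there exists a finite connected bipartite simple graph G such that χ_g(G) − χ_cg(G) ≥ n; in other words, the difference between the game chromatic number and the connected game chromatic number can be arbitrarily large. (One may take G = K_{m,m} minus a perfect matching for m large, using χ_g(K_{m,m} − M) = m and χ_cg(G) ≤ 2.) -/
open scoped Classical

namespace BipartiteProof

open ConnGame Finset

/-- `K_{m,m}` minus a perfect matching, on vertex set `Fin m × Bool`. -/
def BG (m : ℕ) : SimpleGraph (Fin m × Bool) where
  Adj v w := v.2 ≠ w.2 ∧ v.1 ≠ w.1
  symm := by constructor; intro v w h; exact ⟨h.1.symm, h.2.symm⟩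
  loopless := by constructor; intro v h; exact h.1 rfl

lemma bg_adj {m : ℕ} {v w : Fin m × Bool} : (BG m).Adj v w ↔ v.2 ≠ w.2 ∧ v.1 ≠ w.1 :=
  Iff.rfl

lemma pick_ne (m : ℕ) (hm : 3 ≤ m) (i j : Fin m) : ∃ l : Fin m, l ≠ i ∧ l ≠ j := by
  by_contra h
  push_neg at h
  have hsub : (univ : Finset (Fin m)) ⊆ {i, j} := by
    intro l _
    by_cases hl : l = i
    · simp [hl]
    · simp [h l hl]
  have h1 := Finset.card_le_card hsub
  have h2 : ({i, j} : Finset (Fin m)).card ≤ 2 := by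
    classical
    calc ({i, j} : Finset (Fin m)).card ≤ ({j} : Finset (Fin m)).card + 1 :=
          Finset.card_insert_le _ _
      _ ≤ 2 := by simp
  simp [Finset.card_univ] at h1
  omega

lemma count_play_le {V : Type} [Fintype V] [DecidableEq V] {k : ℕ}
    {c : V → Option (Fin k)} {v : V} (a : Fin k) (hv : c v = none) {n : ℕ}
    (h : (univ.filter fun u => c u = none).card ≤ n + 1) :
    (univ.filter fun u => ConnGame.play c v a u = none).card ≤ n := by
  have hmem : v ∈ univ.filter fun u => c u = none := by simp [hv]
  have hsub : (univ.filter fun u => ConnGame.play c v a u = none) ⊆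
      (univ.filter fun u => c u = none).erase v := by
    intro x hx
    simp only [mem_filter, mem_univ, true_and] at hx
    have hxv : x ≠ v := by
      intro h'
      subst h'
      rw [ConnGame.play, Function.update_self] at hx
      simp at hx
    rw [ConnGame.play, Function.update_of_ne hxv] at hx
    exact Finset.mem_erase.mpr ⟨hxv, by simp [hx]⟩
  have h1 := Finset.card_le_card hsub
  rw [Finset.card_erase_of_mem hmem] at h1
  have h0 : 0 < (univ.filter fun u => c u = none).card := Finset.card_pos.mpr ⟨v, hmem⟩
  omega

/-- With more colors than any degree, Alice trivially wins the unrestricted game. -/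
lemma aliceWins_easy {V : Type} [Fintype V] [DecidableEq V] (G : SimpleGraph V) (k : ℕ)
    (hk : ∀ v : V, (univ.filter fun u => G.Adj v u).card < k) :
    ∀ (n : ℕ) (t : Bool) (c : V → Option (Fin k)),
      (univ.filter fun u => c u = none).card ≤ n →
      AliceWinsFrom false G k n t c := by
  intro n
  induction n with
  | zero =>
    intro t c hc
    show ∀ v, (c v).isSome
    intro v
    rw [Option.isSome_iff_ne_none]
    intro hv
    have hmem : v ∈ univ.filter fun u => c u = none := by simp [hv]
    have := Finset.card_pos.mpr ⟨v, hmem⟩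
    omega
  | succ n ih =>
    intro t c hc
    show (∀ v, (c v).isSome) ∨ _
    by_cases hall : ∀ v, (c v).isSome
    · exact Or.inl hall
    right
    have hcol : ∀ v : V, c v = none → ∃ a : Fin k, ∀ u, G.Adj v u → c u ≠ some a := by
      intro v _
      have hcard : ((univ.filter fun u => G.Adj v u).image fun u => c u).card < k :=
        lt_of_le_of_lt Finset.card_image_le (hk v)
      have hex : ∃ a : Fin k,
          (some a : Option (Fin k)) ∉ (univ.filter fun u => G.Adj v u).image fun u => c u := by
        by_contra hco
        push_neg at hco
        have hsub : (univ.image fun a : Fin k => (some a : Option (Fin k))) ⊆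
            (univ.filter fun u => G.Adj v u).image fun u => c u := by
          intro x hx
          simp only [Finset.mem_image, Finset.mem_univ, true_and] at hx
          obtain ⟨a, rfl⟩ := hx
          exact hco a
        have h2 := Finset.card_le_card hsub
        rw [Finset.card_image_of_injective _ (Option.some_injective _)] at h2
        simp [Finset.card_univ] at h2
        omega
      obtain ⟨a, ha⟩ := hex
      exact ⟨a, fun u hu hc' => ha (Finset.mem_image.mpr ⟨u, by simp [hu], hc'⟩)⟩
    push_neg at hall
    obtain ⟨v₀, hv₀⟩ := hall
    have hv₀' : c v₀ = none := by
      cases h : c v₀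
      · rfl
      · rw [h] at hv₀; exact absurd rfl hv₀
    obtain ⟨a₀, ha₀⟩ := hcol v₀ hv₀'
    have hleg₀ : LegalMove false G c v₀ a₀ :=
      ⟨⟨hv₀', ha₀⟩, fun h => Bool.noConfusion h⟩
    cases t
    · show (∃ v a, LegalMove false G c v a) ∧
        ∀ v a, LegalMove false G c v a → AliceWinsFrom false G k n true (ConnGame.play c v a)
      refine ⟨⟨v₀, a₀, hleg₀⟩, fun v a hleg => ?_⟩
      exact ih true _ (count_play_le a hleg.1.1 hc)
    · show ∃ v a, LegalMove false G c v a ∧ AliceWinsFrom false G k n false (ConnGame.play c v a)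
      exact ⟨v₀, a₀, hleg₀, ih false _ (count_play_le a₀ hv₀' hc)⟩

/-- Bob's mirror strategy: with fewer colors than `m`, Alice cannot win on `K_{m,m} - M`. -/
lemma bob_mirror (m k : ℕ) (hk : k < m) :
    ∀ (n : ℕ) (σ : Fin m → Option (Fin k)),
      (∀ i j a, σ i = some a → σ j = some a → i = j) →
      ¬ AliceWinsFrom false (BG m) k n true (fun v => σ v.1) := by
  intro n
  induction n using Nat.strong_induction_on with
  | _ n ih =>
    intro σ hσ hwin
    have hex : ∃ i, σ i = none := by
      by_contra h
      push_neg at h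
      have hs : ∀ i, (σ i).isSome := fun i => Option.isSome_iff_ne_none.mpr (h i)
      have hinj : Function.Injective fun i => (σ i).get (hs i) := by
        intro i j hij
        have h2 : some ((σ i).get (hs i)) = some ((σ j).get (hs j)) := congrArg some hij
        rw [Option.some_get, Option.some_get] at h2
        have hi : σ i = some ((σ i).get (hs i)) := (Option.some_get (hs i)).symm
        exact hσ i j _ hi (h2 ▸ hi)
      have := Fintype.card_le_of_injective _ hinj
      simp at this
      omega
    obtain ⟨i₀, hi₀⟩ := hex
    have hnotall : ¬ ∀ v : Fin m × Bool, ((fun v => σ v.1) v).isSome := by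
      intro h
      have := h (i₀, true)
      simp [hi₀] at this
    match n, hwin with
    | 0, hwin => exact hnotall hwin
    | (n1+1), hwin =>
      rcases hwin with hwin | ⟨v, a, hleg, hwin2⟩
      · exact hnotall hwin
      have hvnone : σ v.1 = none := hleg.1.1
      have hfresh : ∀ j, σ j ≠ some a := by
        intro j hj
        have hji : j ≠ v.1 := by
          intro e; rw [e, hvnone] at hj; simp at hj
        have hadj : (BG m).Adj v (j, !v.2) := ⟨(Bool.not_ne_self v.2).symm, fun e => hji e.symm⟩
        exact hleg.1.2 (j, !v.2) hadj hj
      -- the partner of v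
      set w : Fin m × Bool := (v.1, !v.2) with hw
      have hwv : w ≠ v := by
        intro h
        have : (!v.2) = v.2 := congrArg Prod.snd h
        exact Bool.not_ne_self v.2 this
      have hcw : ConnGame.play (fun v => σ v.1) v a w = none := by
        rw [ConnGame.play, Function.update_of_ne hwv]
        exact hvnone
      have hnotall2 : ¬ ∀ u : Fin m × Bool, (ConnGame.play (fun v => σ v.1) v a u).isSome := by
        intro h
        have := h w
        rw [hcw] at this
        simp at this
      match n1, hwin2 with
      | 0, hwin2 => exact hnotall2 hwin2
      | (n2+1), hwin2 =>
        rcases hwin2 with hwin2 | ⟨_, hall⟩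
        · exact hnotall2 hwin2
        have hlegw : LegalMove false (BG m) (ConnGame.play (fun v => σ v.1) v a) w a := by
          refine ⟨⟨hcw, ?_⟩, fun h => Bool.noConfusion h⟩
          intro u hu
          have hune : u ≠ v := by
            intro e
            rw [e] at hu
            exact hu.2 rfl
          rw [ConnGame.play, Function.update_of_ne hune]
          exact hfresh u.1
        have hwin3 := hall w a hlegw
        set σ' : Fin m → Option (Fin k) := Function.update σ v.1 (some a) with hσ'
        have heq : ConnGame.play (ConnGame.play (fun v => σ v.1) v a) w a = fun u => σ' u.1 := by
          funext u
          by_cases huw : u = w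
          · subst huw
            rw [ConnGame.play, Function.update_self, hσ', hw, Function.update_self]
          · by_cases huv : u = v
            · subst huv
              rw [ConnGame.play, Function.update_of_ne huw, ConnGame.play,
                Function.update_self, hσ', Function.update_self]
            · have hu1 : u.1 ≠ v.1 := by
                intro e
                have h2 : u.2 = v.2 ∨ u.2 = !v.2 := by
                  cases hb : u.2 <;> cases hbv : v.2 <;> simp
                rcases h2 with h2 | h2
                · exact huv (Prod.ext e h2)
                · exact huw (Prod.ext e h2)
              rw [ConnGame.play, Function.update_of_ne huw, ConnGame.play,
                Function.update_of_ne huv, hσ', Function.update_of_ne hu1]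
        have hσ'inj : ∀ i j b, σ' i = some b → σ' j = some b → i = j := by
          intro i j b hi hj
          rw [hσ'] at hi hj
          by_cases hiv : i = v.1 <;> by_cases hjv : j = v.1
          · rw [hiv, hjv]
          · rw [hiv, Function.update_self] at hi
            rw [Function.update_of_ne hjv] at hj
            have : b = a := by injection hi.symm
            rw [this] at hj
            exact absurd hj (hfresh j)
          · rw [hjv, Function.update_self] at hj
            rw [Function.update_of_ne hiv] at hi
            have : b = a := by injection hj.symm
            rw [this] at hi
            exact absurd hi (hfresh i)
          · rw [Function.update_of_ne hiv] at hi
            rw [Function.update_of_ne hjv] at hj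
            exact hσ i j b hi hj
        rw [heq] at hwin3
        exact ih n2 (by omega) σ' hσ'inj hwin3

/-- The bipartition invariant for the connected game with two colors. -/
def Q (m : ℕ) (c : Fin m × Bool → Option (Fin 2)) : Prop :=
  ∀ p q a b, c p = some a → c q = some b → (a = b ↔ p.2 = q.2)

lemma Q_play_first {m : ℕ} {c : Fin m × Bool → Option (Fin 2)}
    (h : ∀ u, c u = none) (v : Fin m × Bool) (a : Fin 2) :
    Q m (ConnGame.play c v a) := by
  intro p q x y hp hq
  have hpv : p = v := by
    by_contra hne
    rw [ConnGame.play, Function.update_of_ne hne, h p] at hp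
    simp at hp
  have hqv : q = v := by
    by_contra hne
    rw [ConnGame.play, Function.update_of_ne hne, h q] at hq
    simp at hq
  subst hpv; subst hqv
  rw [ConnGame.play, Function.update_self] at hp hq
  have : x = y := by rw [← Option.some_inj, ← hp, ← hq]
  simp [this]

lemma fin2_eq {a y b : Fin 2} (h1 : a ≠ b) (h2 : y ≠ b) : a = y := by
  revert h1 h2
  revert a y b
  decide

lemma bool_eq_of_ne {x y z : Bool} (h1 : x ≠ z) (h2 : y ≠ z) : x = y := by
  revert h1 h2
  revert x y z
  decide

lemma Q_play {m : ℕ} {c : Fin m × Bool → Option (Fin 2)} (hQ : Q m c)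
    {v u : Fin m × Bool} {a b : Fin 2}
    (hv : c v = none) (hadj : (BG m).Adj v u) (hu : c u = some b)
    (hprop : ∀ u', (BG m).Adj v u' → c u' ≠ some a) :
    Q m (ConnGame.play c v a) := by
  have hab : a ≠ b := by
    intro e
    exact hprop u hadj (by rw [e, hu])
  -- key: for any colored vertex w, a = its color iff w is on v's side
  have key : ∀ w y, c w = some y → (a = y ↔ v.2 = w.2) := by
    intro w y hwy
    by_cases hside : w.2 = u.2
    · have hyb : y = b := by
        have := hQ w u y b hwy hu
        exact this.mpr hside
      constructor
      · intro h; rw [hyb] at h; exact absurd h hab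
      · intro h; exact absurd (h.trans hside) hadj.1
    · have hvw : v.2 = w.2 := bool_eq_of_ne hadj.1 hside
      have hyb : y ≠ b := by
        intro e
        have := (hQ w u y b hwy hu).mp e
        exact hside this
      exact ⟨fun _ => hvw, fun _ => fin2_eq hab hyb⟩
  intro p q x y hp hq
  by_cases hpv : p = v <;> by_cases hqv : q = v
  · subst hpv; subst hqv
    rw [ConnGame.play, Function.update_self] at hp hq
    have : x = y := by rw [← Option.some_inj, ← hp, ← hq]
    simp [this]
  · subst hpv
    rw [ConnGame.play, Function.update_self] at hp
    rw [ConnGame.play, Function.update_of_ne hqv] at hq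
    have hxa : x = a := by injection hp.symm
    subst hxa
    exact key q y hq
  · subst hqv
    rw [ConnGame.play, Function.update_self] at hq
    rw [ConnGame.play, Function.update_of_ne hpv] at hp
    have hya : y = a := by injection hq.symm
    subst hya
    have := key p x hp
    constructor
    · intro h; exact ((this.mp h.symm)).symm
    · intro h; exact (this.mpr h.symm).symm
  · rw [ConnGame.play, Function.update_of_ne hpv] at hp
    rw [ConnGame.play, Function.update_of_ne hqv] at hq
    exact hQ p q x y hp hq

lemma exists_frontier (m : ℕ) (hm : 3 ≤ m) {k : ℕ} (c : Fin m × Bool → Option (Fin k))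
    (hw : ∃ w, (c w).isSome) (hv : ∃ v, c v = none) :
    ∃ v u, c v = none ∧ (BG m).Adj v u ∧ (c u).isSome := by
  by_contra h
  push_neg at h
  have H : ∀ v u, c v = none → (BG m).Adj v u → c u = none := by
    intro v u hcv hadj
    have := h v u hcv hadj
    cases hcu : c u
    · rfl
    · rw [hcu] at this; exact absurd rfl this
  obtain ⟨v0, hv0⟩ := hv
  obtain ⟨i, s⟩ := v0
  have hA1 : ∀ l : Fin m, l ≠ i → c (l, !s) = none := by
    intro l hl
    exact H (i, s) (l, !s) hv0 ⟨(Bool.not_ne_self s).symm, fun e => hl e.symm⟩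
  have hA2 : ∀ p : Fin m, c (p, s) = none := by
    intro p
    obtain ⟨l, hli, hlp⟩ := pick_ne m hm i p
    exact H (l, !s) (p, s) (hA1 l hli) ⟨Bool.not_ne_self s, hlp⟩
  have hA3 : ∀ p : Fin m, c (p, !s) = none := by
    intro p
    obtain ⟨l, hlp, _⟩ := pick_ne m hm p p
    exact H (l, s) (p, !s) (hA2 l) ⟨(Bool.not_ne_self s).symm, hlp⟩
  obtain ⟨w, hws⟩ := hw
  obtain ⟨j, t⟩ := w
  have hwt : c (j, t) = none := by
    by_cases ht : t = s
    · rw [ht]; exact hA2 j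
    · have : t = !s := by
        cases hs : s <;> cases ht2 : t <;> simp_all
      rw [this]; exact hA3 j
  rw [hwt] at hws
  simp at hws

lemma exists_good_move (m : ℕ) (hm : 3 ≤ m) (c : Fin m × Bool → Option (Fin 2)) (hQ : Q m c)
    (hv : ∃ v, c v = none) :
    ∃ v a, c v = none ∧ LegalMove true (BG m) c v a ∧ Q m (ConnGame.play c v a) := by
  by_cases hall : ∀ u, c u = none
  · refine ⟨(⟨0, by omega⟩, false), 0, hall _, ⟨⟨hall _, ?_⟩, fun _ => Or.inl hall⟩,
      Q_play_first hall _ _⟩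
    intro u _
    rw [hall u]
    exact fun h => by simp at h
  · push_neg at hall
    obtain ⟨w0, hw0⟩ := hall
    have hw0' : (c w0).isSome := Option.isSome_iff_ne_none.mpr hw0
    obtain ⟨v, u, hvn, hadj, hus⟩ := exists_frontier m hm c ⟨w0, hw0'⟩ hv
    obtain ⟨b, hb⟩ := Option.isSome_iff_exists.mp hus
    have hprop : ∀ u', (BG m).Adj v u' → c u' ≠ some (b + 1) := by
      intro u' hadj' hcu'
      have hside : u.2 = u'.2 := bool_eq_of_ne (Ne.symm hadj.1) (Ne.symm hadj'.1)
      have hbb : b = b + 1 := (hQ u u' b (b+1) hb hcu').mpr hside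
      have : ∀ x : Fin 2, x ≠ x + 1 := by decide
      exact this b hbb
    exact ⟨v, b + 1, hvn, ⟨⟨hvn, hprop⟩, fun _ => Or.inr ⟨u, hadj, hus⟩⟩,
      Q_play hQ hvn hadj hb hprop⟩

/-- Alice wins the connected game with two colors on `K_{m,m} - M`. -/
lemma aliceWins_conn (m : ℕ) (hm : 3 ≤ m) :
    ∀ (n : ℕ) (t : Bool) (c : Fin m × Bool → Option (Fin 2)), Q m c →
      (univ.filter fun u => c u = none).card ≤ n →
      AliceWinsFrom true (BG m) 2 n t c := by
  intro n
  induction n with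
  | zero =>
    intro t c _ hc
    show ∀ v, (c v).isSome
    intro v
    rw [Option.isSome_iff_ne_none]
    intro hv
    have hmem : v ∈ univ.filter fun u => c u = none := by simp [hv]
    have := Finset.card_pos.mpr ⟨v, hmem⟩
    omega
  | succ n ih =>
    intro t c hQ hc
    show (∀ v, (c v).isSome) ∨ _
    by_cases hall : ∀ v, (c v).isSome
    · exact Or.inl hall
    right
    have hex : ∃ v, c v = none := by
      push_neg at hall
      obtain ⟨v, hv⟩ := hall
      refine ⟨v, ?_⟩
      cases h : c v
      · rfl
      · rw [h] at hv; exact absurd rfl hv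
    obtain ⟨v, a, hvnone, hleg, hQ'⟩ := exists_good_move m hm c hQ hex
    cases t
    · show (∃ v a, LegalMove true (BG m) c v a) ∧
        ∀ v a, LegalMove true (BG m) c v a →
          AliceWinsFrom true (BG m) 2 n true (ConnGame.play c v a)
      refine ⟨⟨v, a, hleg⟩, fun v' a' hleg' => ?_⟩
      have hv' : c v' = none := hleg'.1.1
      have hQ'' : Q m (ConnGame.play c v' a') := by
        rcases hleg'.2 rfl with hnone | ⟨u, hadj, hu⟩
        · exact Q_play_first hnone _ _
        · obtain ⟨b, hb⟩ := Option.isSome_iff_exists.mp hu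
          exact Q_play hQ hv' hadj hb hleg'.1.2
      exact ih true _ hQ'' (count_play_le a' hv' hc)
    · show ∃ v a, LegalMove true (BG m) c v a ∧
        AliceWinsFrom true (BG m) 2 n false (ConnGame.play c v a)
      exact ⟨v, a, hleg, ih false _ hQ' (count_play_le a hvnone hc)⟩

lemma bg_colorable (m : ℕ) : (BG m).Colorable 2 := by
  refine ⟨SimpleGraph.Coloring.mk (fun v => if v.2 then 0 else 1) ?_⟩
  intro v w hadj
  have := hadj.1
  cases hv : v.2 <;> cases hw : w.2 <;> simp_all

lemma bg_connected (m : ℕ) (hm : 3 ≤ m) : (BG m).Connected := by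
  rw [SimpleGraph.connected_iff]
  refine ⟨?_, ⟨(⟨0, by omega⟩, false)⟩⟩
  intro v w
  obtain ⟨i, s⟩ := v
  obtain ⟨j, t⟩ := w
  by_cases hst : s = t
  · subst hst
    by_cases hij : i = j
    · subst hij
      exact SimpleGraph.Reachable.refl _
    · obtain ⟨l, hli, hlj⟩ := pick_ne m hm i j
      have h1 : (BG m).Adj (i, s) (l, !s) := ⟨(Bool.not_ne_self s).symm, fun e => hli e.symm⟩
      have h2 : (BG m).Adj (l, !s) (j, s) := ⟨Bool.not_ne_self s, hlj⟩
      exact h1.reachable.trans h2.reachable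
  · have ht : t = !s := by cases hs : s <;> cases ht2 : t <;> simp_all
    subst ht
    by_cases hij : i = j
    · subst hij
      obtain ⟨l, hli, _⟩ := pick_ne m hm i i
      obtain ⟨p, hpi, hpl⟩ := pick_ne m hm i l
      have h1 : (BG m).Adj (i, s) (l, !s) := ⟨(Bool.not_ne_self s).symm, fun e => hli e.symm⟩
      have h2 : (BG m).Adj (l, !s) (p, s) := ⟨Bool.not_ne_self s, fun e => hpl e.symm⟩
      have h3 : (BG m).Adj (p, s) (i, !s) := ⟨(Bool.not_ne_self s).symm, hpi⟩
      exact (h1.reachable.trans h2.reachable).trans h3.reachable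
    · exact ((BG m).adj_symm ⟨(Bool.not_ne_self s), fun e => hij e.symm⟩).reachable

end BipartiteProof


/-- For every integer `n ≥ 1`, there exists a finite connected bipartite
simple graph `G` with `χ_g(G) − χ_cg(G) ≥ n`. -/
theorem exists_bipartite_game_minus_connGame_ge (n : ℕ) (hn : 1 ≤ n) :
    ∃ (V : Type) (iF : Fintype V) (iD : DecidableEq V) (G : SimpleGraph V),
      G.Connected ∧ G.Colorable 2 ∧
        n ≤ @ConnGame.gameChromaticNumber V iF iD G -
              @ConnGame.connGameChromaticNumber V iF iD G := by
  classical
  set m := n + 2 with hm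
  refine ⟨Fin m × Bool, inferInstance, inferInstance, BipartiteProof.BG m,
    BipartiteProof.bg_connected m (by omega), BipartiteProof.bg_colorable m, ?_⟩
  set G := BipartiteProof.BG m with hG
  set K := Fintype.card (Fin m × Bool) with hK
  -- the unrestricted game is winnable with K colors
  have hdeg : ∀ v : Fin m × Bool,
      (Finset.univ.filter fun u => G.Adj v u).card < K := by
    intro v
    have hsub : (Finset.univ.filter fun u => G.Adj v u) ⊆ Finset.univ.erase v := by
      intro u hu
      simp only [Finset.mem_filter, Finset.mem_univ, true_and] at hu
      exact Finset.mem_erase.mpr ⟨fun e => hu.2 (congrArg Prod.fst e).symm, Finset.mem_univ u⟩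
    have h1 := Finset.card_le_card hsub
    rw [Finset.card_erase_of_mem (Finset.mem_univ v)] at h1
    have h2 : 0 < K := Fintype.card_pos
    rw [Finset.card_univ] at h1
    omega
  have hmem1 : ConnGame.AliceWinsColoringGame false G K := by
    apply BipartiteProof.aliceWins_easy G K hdeg K true
    calc (Finset.univ.filter fun u => (fun _ : Fin m × Bool =>
          (none : Option (Fin K))) u = none).card
        ≤ (Finset.univ : Finset (Fin m × Bool)).card := Finset.card_filter_le _ _
      _ = K := Finset.card_univ
  have hne1 : {k | ConnGame.AliceWinsColoringGame false G k}.Nonempty := ⟨K, hmem1⟩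
  have h1 : m ≤ ConnGame.gameChromaticNumber G := by
    by_contra h
    push_neg at h
    have hmem := Nat.sInf_mem hne1
    have : ConnGame.AliceWinsColoringGame false G (ConnGame.gameChromaticNumber G) := hmem
    exact BipartiteProof.bob_mirror m (ConnGame.gameChromaticNumber G) h K
      (fun _ => none) (fun i j a hi _ => by simp at hi) this
  have h2 : ConnGame.connGameChromaticNumber G ≤ 2 := by
    apply Nat.sInf_le
    show ConnGame.AliceWinsColoringGame true G 2
    apply BipartiteProof.aliceWins_conn m (by omega) K true
    · intro p q a b hp
      simp at hp
    · calc (Finset.univ.filter fun u => (fun _ : Fin m × Bool =>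
            (none : Option (Fin 2))) u = none).card
          ≤ (Finset.univ : Finset (Fin m × Bool)).card := Finset.card_filter_le _ _
        _ = K := Finset.card_univ
  have := tsub_le_tsub h1 h2
  omega
end
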